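/- The line-restricted Metropolis kernel M_a is reversible with respect to the uniform distribution π_a on K(a_2): for all measurable A, B ⊆ K, ∫_{A ∩ K(a_2)} M_a(x,B) dx = ∫_{B ∩ K(a_2)} M_a(x,A) dx. -/

import Mathlib

open MeasureTheory
open scoped ENNReal

namespace LazyLineMetropolisReversible

variable {d : ℕ}

/-- `η(x,y) = (d κ_d / 2) q(y-x) |y-x|^{d-1}`. -/
noncomputable def eta (d : ℕ) (q : EuclideanSpace ℝ (Fin d) → ℝ)
    (x y : EuclideanSpace ℝ (Fin d)) : ℝ :=
  (d * (volume (Metric.ball (0 : EuclideanSpace ℝ (Fin d)) 1)).toReal / 2) *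
    q (y - x) * ‖y - x‖ ^ (d - 1)

/-- The lazy line-restricted Metropolis kernel on the chord
`[x]_a = L_{a₂}(x,a₁) = {x + r a₁ ∈ K(a₂) : r ∈ ℝ}` (parametrized by `r ∈ ℝ`):
`M_a(x,A) = (1/2) ∫_{[x]_a} 1_A(y) η(x,y) dy + 1_A(x)(1 - (1/2) ∫_{[x]_a} η(x,y) dy)`. -/
noncomputable def lazyLineMetropolis (K : Set (EuclideanSpace ℝ (Fin d)))
    (ρ : EuclideanSpace ℝ (Fin d) → ℝ) (q : EuclideanSpace ℝ (Fin d) → ℝ)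
    (a₁ : EuclideanSpace ℝ (Fin d)) (a₂ : ℝ)
    (x : EuclideanSpace ℝ (Fin d)) (A : Set (EuclideanSpace ℝ (Fin d))) : ℝ :=
  (1 / 2) * (∫ r in {r : ℝ | x + r • a₁ ∈ K ∧ a₂ < ρ (x + r • a₁) ∧ x + r • a₁ ∈ A},
      eta d q x (x + r • a₁) ∂volume) +
    A.indicator (fun _ =>
      1 - (1 / 2) * ∫ r in {r : ℝ | x + r • a₁ ∈ K ∧ a₂ < ρ (x + r • a₁)},
        eta d q x (x + r • a₁) ∂volume) x

open Set Metric in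
set_option maxHeartbeats 2000000 in
/-- the lazy line-restricted Metropolis kernel `M_a` is reversible with
respect to the uniform distribution on the level set `K(a₂)`: for all measurable
`A, B ⊆ K`, `∫_{A ∩ K(a₂)} M_a(x,B) dx = ∫_{B ∩ K(a₂)} M_a(x,A) dx`. -/
theorem lazyLineMetropolis_reversible (hd : 0 < d)
    (K : Set (EuclideanSpace ℝ (Fin d))) (hK : MeasurableSet K)
    (ρ : EuclideanSpace ℝ (Fin d) → ℝ) (hρ_meas : Measurable ρ)
    (hρ_pos : ∀ x ∈ K, 0 < ρ x) (hρ_int : IntegrableOn ρ K)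
    (q : EuclideanSpace ℝ (Fin d) → ℝ) (hq_meas : Measurable q)
    (hq_nonneg : ∀ z, 0 ≤ q z) (hq_prob : ∫ z, q z ∂volume = 1)
    (hq_rot : ∀ r : ℝ, 0 < r → ∀ θ₁ θ₂ : EuclideanSpace ℝ (Fin d),
      ‖θ₁‖ = 1 → ‖θ₂‖ = 1 → q (r • θ₁) = q (r • θ₂))
    (a₁ : EuclideanSpace ℝ (Fin d)) (ha₁ : ‖a₁‖ = 1) (a₂ : ℝ) (ha₂ : 0 ≤ a₂)
    (A B : Set (EuclideanSpace ℝ (Fin d))) (hA : MeasurableSet A) (hB : MeasurableSet B)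
    (hAK : A ⊆ K) (hBK : B ⊆ K) :
    ∫ x in A ∩ {z | z ∈ K ∧ a₂ < ρ z}, lazyLineMetropolis K ρ q a₁ a₂ x B ∂volume
      = ∫ x in B ∩ {z | z ∈ K ∧ a₂ < ρ z}, lazyLineMetropolis K ρ q a₁ a₂ x A ∂volume := by
  classical
  haveI : Nonempty (Fin d) := ⟨⟨0, hd⟩⟩
  haveI : Nontrivial (EuclideanSpace ℝ (Fin d)) := inferInstance
  set κ : ℝ := (volume (Metric.ball (0 : EuclideanSpace ℝ (Fin d)) 1)).toReal with hκdef
  have hκpos : 0 < κ :=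
    ENNReal.toReal_pos (measure_ball_pos _ _ one_pos).ne' measure_ball_lt_top.ne
  set c : ℝ := d * κ / 2 with hcdef
  have hcpos : 0 < c := by
    apply div_pos (mul_pos _ hκpos) two_pos
    exact_mod_cast Nat.cast_pos.mpr hd
  -- q is symmetric along the direction a₁
  have hqa : ∀ r : ℝ, q (r • a₁) = q (|r| • a₁) := by
    intro r
    rcases lt_trichotomy r 0 with h | h | h
    · have : r • a₁ = |r| • (-a₁) := by
        rw [abs_of_neg h]; simp [neg_smul]
      rw [this, abs_of_neg h]
      exact hq_rot (-r) (by linarith) (-a₁) a₁ (by simp [ha₁]) ha₁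
    · simp [h]
    · rw [abs_of_pos h]
  set F : ℝ → ℝ := fun r => c * q (r • a₁) * |r| ^ (d - 1) with hFdef
  have hF_nonneg : ∀ r, 0 ≤ F r := fun r => by
    apply mul_nonneg (mul_nonneg hcpos.le (hq_nonneg _)) (pow_nonneg (abs_nonneg r) _)
  have hF_meas : Measurable F := by
    apply Measurable.mul
    apply Measurable.mul measurable_const
    · exact hq_meas.comp ((continuous_id.smul continuous_const).measurable)
    · exact (measurable_id.abs.pow_const _)
  have hF_neg : ∀ r, F (-r) = F r := fun r => by
    simp only [hFdef, abs_neg]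
    rw [hqa (-r), hqa r, abs_neg]
  have hFeta : ∀ (x : EuclideanSpace ℝ (Fin d)) (r : ℝ),
      eta d q x (x + r • a₁) = F r := by
    intro x r
    have h1 : x + r • a₁ - x = r • a₁ := by abel
    rw [eta, h1, norm_smul, ha₁, mul_one, Real.norm_eq_abs]
  -- q is integrable
  have hq_int : Integrable q := by
    by_contra h
    rw [integral_undef h] at hq_prob
    norm_num at hq_prob
  -- q equals a function of the norm a.e.
  set g : ℝ → ℝ := fun y => q (y • a₁) with hgdef
  have hqg : ∀ z : EuclideanSpace ℝ (Fin d), z ≠ 0 → q z = g ‖z‖ := by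
    intro z hz
    have hn : (0:ℝ) < ‖z‖ := norm_pos_iff.mpr hz
    have h1 : z = ‖z‖ • (‖z‖⁻¹ • z) := by
      rw [smul_smul, mul_inv_cancel₀ hn.ne', one_smul]
    rw [hgdef]
    calc q z = q (‖z‖ • (‖z‖⁻¹ • z)) := by rw [← h1]
      _ = q (‖z‖ • a₁) := hq_rot ‖z‖ hn _ a₁ (by
            rw [norm_smul, norm_inv, norm_norm, inv_mul_cancel₀ hn.ne']) ha₁
  have hae : (fun z : EuclideanSpace ℝ (Fin d) => g ‖z‖) =ᵐ[volume] q := by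
    have hsub : {z : EuclideanSpace ℝ (Fin d) | g ‖z‖ ≠ q z} ⊆ {0} := by
      intro z hz
      by_contra h
      exact hz (hqg z (by simpa using h)).symm
    exact ae_iff.mpr (measure_mono_null hsub (measure_singleton (0 : EuclideanSpace ℝ (Fin d))))
  have hgnorm_int : ∫ z : EuclideanSpace ℝ (Fin d), g ‖z‖ ∂volume = 1 := by
    rw [integral_congr_ae hae, hq_prob]
  -- polar coordinates
  have hpolar := integral_fun_norm_addHaar (volume : Measure (EuclideanSpace ℝ (Fin d))) g
  rw [finrank_euclideanSpace_fin, hgnorm_int] at hpolar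
  have hJ : ∫ y in Set.Ioi (0:ℝ), y ^ (d - 1) * g y = 1 / (d * κ) := by
    have hd' : (0:ℝ) < d * κ := mul_pos (by exact_mod_cast hd) hκpos
    have h2 : 1 = (d * κ) * ∫ y in Set.Ioi (0:ℝ), y ^ (d - 1) * g y := by
      simp only [nsmul_eq_mul, smul_eq_mul] at hpolar
      rw [hpolar, mul_assoc]; rfl
    rw [eq_div_iff hd'.ne']
    linear_combination -h2
  have hJint : IntegrableOn (fun y => y ^ (d - 1) * g y) (Set.Ioi (0:ℝ)) := by
    by_contra h
    rw [IntegrableOn] at h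
    rw [integral_undef h] at hJ
    have hd' : (0:ℝ) < d * κ := mul_pos (by exact_mod_cast hd) hκpos
    rw [eq_comm, div_eq_iff hd'.ne'] at hJ
    norm_num at hJ
  -- the total mass of F is 1
  have hFIoi_eq : Set.EqOn (fun y => c * (y ^ (d-1) * g y)) F (Set.Ioi (0:ℝ)) := by
    intro y hy
    simp only [hFdef, hgdef]
    rw [abs_of_pos hy]
    ring
  have hFint_Ioi : IntegrableOn F (Set.Ioi (0:ℝ)) :=
    IntegrableOn.congr_fun (hJint.const_mul c) hFIoi_eq measurableSet_Ioi
  have hFhalf : ∫ y in Set.Ioi (0:ℝ), F y = 1 / 2 := by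
    rw [← setIntegral_congr_fun measurableSet_Ioi hFIoi_eq, integral_const_mul, hJ]
    rw [hcdef]
    field_simp
  have hlint_Ioi : ∫⁻ y in Set.Ioi (0:ℝ), ENNReal.ofReal (F y) ∂volume
      = ENNReal.ofReal (1/2) := by
    rw [← ofReal_integral_eq_lintegral_ofReal hFint_Ioi
      (ae_of_all _ fun y => hF_nonneg y), hFhalf]
  have negint : ∀ V : ℝ → ℝ≥0∞, ∫⁻ r, V (-r) ∂volume = ∫⁻ r, V r ∂volume := by
    intro V
    conv_rhs => rw [← Measure.map_neg_eq_self (volume : Measure ℝ)]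
    exact (lintegral_map_equiv V (MeasurableEquiv.neg ℝ)).symm
  have hI : ∫⁻ r, ENNReal.ofReal (F r) ∂volume = 1 := by
    rw [← lintegral_add_compl (fun r => ENNReal.ofReal (F r)) measurableSet_Ioi (μ := volume)]
    have hIic : ∫⁻ r in (Set.Ioi (0:ℝ))ᶜ, ENNReal.ofReal (F r) ∂volume
        = ∫⁻ r in Set.Iio (0:ℝ), ENNReal.ofReal (F r) ∂volume := by
      rw [compl_Ioi]
      exact setLIntegral_congr (Iio_ae_eq_Iic (a := (0:ℝ))).symm
    have hIio : ∫⁻ r in Set.Iio (0:ℝ), ENNReal.ofReal (F r) ∂volume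
        = ∫⁻ r in Set.Ioi (0:ℝ), ENNReal.ofReal (F r) ∂volume := by
      rw [← lintegral_indicator measurableSet_Iio, ← lintegral_indicator measurableSet_Ioi]
      rw [← negint (fun r => (Set.Iio (0:ℝ)).indicator (fun s => ENNReal.ofReal (F s)) r)]
      congr 1
      funext r
      by_cases h : r ∈ Set.Ioi (0:ℝ)
      · have h' : -r ∈ Set.Iio (0:ℝ) := by simpa using h
        rw [Set.indicator_of_mem h' , Set.indicator_of_mem h, hF_neg]
      · have h' : -r ∉ Set.Iio (0:ℝ) := by simpa using h
        rw [Set.indicator_of_notMem h', Set.indicator_of_notMem h]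
    rw [hIic, hIio, hlint_Ioi, ← ENNReal.ofReal_add (by norm_num) (by norm_num)]
    norm_num
  -- the level set
  set S : Set (EuclideanSpace ℝ (Fin d)) := {z | z ∈ K ∧ a₂ < ρ z} with hSdef
  have hSmeas : MeasurableSet S := by
    have h : S = K ∩ ρ ⁻¹' (Set.Ioi a₂) := by
      ext z
      simp [hSdef]
    rw [h]
    exact hK.inter (hρ_meas measurableSet_Ioi)
  have hlinemeas : ∀ x : EuclideanSpace ℝ (Fin d), Measurable fun r : ℝ => x + r • a₁ :=
    fun x => (continuous_const.add (continuous_id.smul continuous_const)).measurable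
  have hprodmeas : Measurable fun p : (EuclideanSpace ℝ (Fin d)) × ℝ => p.1 + p.2 • a₁ :=
    (continuous_fst.add (continuous_snd.smul continuous_const)).measurable
  have hprodmeas' : Measurable fun p : ℝ × (EuclideanSpace ℝ (Fin d)) => p.2 + p.1 • a₁ :=
    (continuous_snd.add (continuous_fst.smul continuous_const)).measurable
  set G : Set (EuclideanSpace ℝ (Fin d)) → EuclideanSpace ℝ (Fin d) → ℝ≥0∞ :=
    fun D x => ∫⁻ r in {r : ℝ | x + r • a₁ ∈ D}, ENNReal.ofReal (F r) ∂volume with hGdef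
  have hG_ind : ∀ (D : Set (EuclideanSpace ℝ (Fin d))), MeasurableSet D →
      ∀ x, G D x = ∫⁻ r, D.indicator (fun _ => (1:ℝ≥0∞)) (x + r • a₁)
        * ENNReal.ofReal (F r) ∂volume := by
    intro D hD x
    rw [hGdef]
    dsimp only
    rw [← lintegral_indicator (show MeasurableSet {r : ℝ | x + r • a₁ ∈ D} from hlinemeas x hD)]
    congr 1
    funext r
    by_cases h : x + r • a₁ ∈ D
    · rw [Set.indicator_of_mem (show r ∈ {r : ℝ | x + r • a₁ ∈ D} from h),
        Set.indicator_of_mem h, one_mul]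
    · rw [Set.indicator_of_notMem (show r ∉ {r : ℝ | x + r • a₁ ∈ D} from h),
        Set.indicator_of_notMem h, zero_mul]
  have hGle : ∀ D x, G D x ≤ 1 := by
    intro D x
    rw [hGdef]
    calc ∫⁻ r in {r : ℝ | x + r • a₁ ∈ D}, ENNReal.ofReal (F r) ∂volume
        ≤ ∫⁻ r, ENNReal.ofReal (F r) ∂volume := setLIntegral_le_lintegral _ _
      _ = 1 := hI
  have hGmeas : ∀ D, MeasurableSet D → Measurable (G D) := by
    intro D hD
    have h : G D = fun x => ∫⁻ r, (fun p : (EuclideanSpace ℝ (Fin d)) × ℝ =>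
        D.indicator (fun _ => (1:ℝ≥0∞)) (p.1 + p.2 • a₁) * ENNReal.ofReal (F p.2)) (x, r)
          ∂volume := funext (hG_ind D hD)
    rw [h]
    apply Measurable.lintegral_prod_right
    exact ((measurable_const.indicator hD).comp hprodmeas).mul
      ((ENNReal.measurable_ofReal.comp hF_meas).comp measurable_snd)
  set N : Set (EuclideanSpace ℝ (Fin d)) → EuclideanSpace ℝ (Fin d) → ℝ≥0∞ := fun C x =>
    (1/2 : ℝ≥0∞) * G (S ∩ C) x
      + C.indicator (fun y => 1 - (1/2 : ℝ≥0∞) * G S y) x with hNdef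
  have hNmeas : ∀ C, MeasurableSet C → Measurable (N C) := by
    intro C hC
    rw [hNdef]
    exact (measurable_const.mul (hGmeas _ (hSmeas.inter hC))).add
      ((measurable_const.sub (measurable_const.mul (hGmeas S hSmeas))).indicator hC)
  have hhalf_le : ∀ D x, (1/2 : ℝ≥0∞) * G D x ≤ 1 := by
    intro D x
    calc (1/2 : ℝ≥0∞) * G D x ≤ (1/2 : ℝ≥0∞) * 1 := mul_le_mul' le_rfl (hGle D x)
      _ ≤ 1 := by norm_num
  have hNtop : ∀ C x, N C x < ⊤ := by
    intro C x
    rw [hNdef]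
    apply ENNReal.add_lt_top.mpr
    constructor
    · exact lt_of_le_of_lt (hhalf_le _ x) ENNReal.one_lt_top
    · by_cases h : x ∈ C
      · rw [Set.indicator_of_mem h]
        exact lt_of_le_of_lt tsub_le_self ENNReal.one_lt_top
      · rw [Set.indicator_of_notMem h]
        exact ENNReal.zero_lt_top
  have hM : ∀ C, MeasurableSet C → ∀ x,
      lazyLineMetropolis K ρ q a₁ a₂ x C = (N C x).toReal := by
    intro C hC x
    have hset1 : {r : ℝ | x + r • a₁ ∈ K ∧ a₂ < ρ (x + r • a₁) ∧ x + r • a₁ ∈ C}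
        = {r : ℝ | x + r • a₁ ∈ S ∩ C} := by
      ext r
      simp only [Set.mem_setOf_eq, Set.mem_inter_iff, hSdef]
      tauto
    have hset2 : {r : ℝ | x + r • a₁ ∈ K ∧ a₂ < ρ (x + r • a₁)}
        = {r : ℝ | x + r • a₁ ∈ S} := rfl
    rw [lazyLineMetropolis, hset1, hset2]
    simp only [hFeta]
    have e : ∀ D : Set (EuclideanSpace ℝ (Fin d)),
        (∫ r in {r : ℝ | x + r • a₁ ∈ D}, F r ∂volume) = (G D x).toReal := by
      intro D
      rw [integral_eq_lintegral_of_nonneg_ae (ae_of_all _ hF_nonneg)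
        hF_meas.aestronglyMeasurable.restrict]
    rw [e (S ∩ C), e S]
    have hfin1 : (1/2 : ℝ≥0∞) * G (S ∩ C) x ≠ ⊤ :=
      ne_top_of_lt (lt_of_le_of_lt (hhalf_le _ x) ENNReal.one_lt_top)
    have hfin2 : C.indicator (fun y => 1 - (1/2 : ℝ≥0∞) * G S y) x ≠ ⊤ := by
      by_cases h : x ∈ C
      · rw [Set.indicator_of_mem h]
        exact ne_top_of_lt (lt_of_le_of_lt tsub_le_self ENNReal.one_lt_top)
      · rw [Set.indicator_of_notMem h]
        exact ENNReal.zero_ne_top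
    rw [hNdef]
    dsimp only
    rw [ENNReal.toReal_add hfin1 hfin2, ENNReal.toReal_mul]
    congr 1
    · norm_num
    · by_cases h : x ∈ C
      · rw [Set.indicator_of_mem h, Set.indicator_of_mem h,
          ENNReal.toReal_sub_of_le (hhalf_le S x) ENNReal.one_ne_top,
          ENNReal.toReal_mul, ENNReal.toReal_one]
        norm_num
      · rw [Set.indicator_of_notMem h, Set.indicator_of_notMem h, ENNReal.toReal_zero]
  -- the key symmetry (Fubini + translation + reflection)
  have swap : ∀ C D : Set (EuclideanSpace ℝ (Fin d)), MeasurableSet C → MeasurableSet D →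
      ∫⁻ x in C, G D x ∂volume = ∫⁻ x in D, G C x ∂volume := by
    have repr : ∀ C D : Set (EuclideanSpace ℝ (Fin d)), MeasurableSet C → MeasurableSet D →
        ∫⁻ x in C, G D x ∂volume = ∫⁻ x, ∫⁻ r,
          C.indicator (fun _ => (1:ℝ≥0∞)) x * (D.indicator (fun _ => (1:ℝ≥0∞)) (x + r • a₁)
            * ENNReal.ofReal (F r)) ∂volume ∂volume := by
      intro C D hC hD
      rw [← lintegral_indicator hC]
      congr 1
      funext x
      by_cases h : x ∈ C
      · rw [Set.indicator_of_mem h, hG_ind D hD x]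
        congr 1
        funext r
        rw [Set.indicator_of_mem h, one_mul]
      · rw [Set.indicator_of_notMem h]
        symm
        calc ∫⁻ r, C.indicator (fun _ => (1:ℝ≥0∞)) x
              * (D.indicator (fun _ => (1:ℝ≥0∞)) (x + r • a₁) * ENNReal.ofReal (F r)) ∂volume
            = ∫⁻ _r : ℝ, 0 ∂volume := by
              congr 1
              funext r
              rw [Set.indicator_of_notMem h, zero_mul]
          _ = 0 := lintegral_zero
    intro C D hC hD
    have m1 : Measurable (fun p : (EuclideanSpace ℝ (Fin d)) × ℝ =>
        C.indicator (fun _ => (1:ℝ≥0∞)) p.1 * (D.indicator (fun _ => (1:ℝ≥0∞)) (p.1 + p.2 • a₁)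
          * ENNReal.ofReal (F p.2))) :=
      ((measurable_const.indicator hC).comp measurable_fst).mul
        (((measurable_const.indicator hD).comp hprodmeas).mul
          ((ENNReal.measurable_ofReal.comp hF_meas).comp measurable_snd))
    have m2 : Measurable (fun p : ℝ × (EuclideanSpace ℝ (Fin d)) =>
        C.indicator (fun _ => (1:ℝ≥0∞)) (p.2 + p.1 • a₁) * (D.indicator (fun _ => (1:ℝ≥0∞)) p.2
          * ENNReal.ofReal (F p.1))) :=
      ((measurable_const.indicator hC).comp hprodmeas').mul
        (((measurable_const.indicator hD).comp measurable_snd).mul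
          ((ENNReal.measurable_ofReal.comp hF_meas).comp measurable_fst))
    rw [repr C D hC hD, repr D C hD hC]
    rw [lintegral_lintegral_swap m1.aemeasurable]
    have step1 : ∀ r : ℝ, (∫⁻ x, C.indicator (fun _ => (1:ℝ≥0∞)) x
        * (D.indicator (fun _ => (1:ℝ≥0∞)) (x + r • a₁) * ENNReal.ofReal (F r)) ∂volume)
        = ∫⁻ x, C.indicator (fun _ => (1:ℝ≥0∞)) (x + (-r) • a₁)
          * (D.indicator (fun _ => (1:ℝ≥0∞)) x * ENNReal.ofReal (F r)) ∂volume := by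
      intro r
      rw [← lintegral_add_right_eq_self (fun x => C.indicator (fun _ => (1:ℝ≥0∞)) (x + (-r) • a₁)
        * (D.indicator (fun _ => (1:ℝ≥0∞)) x * ENNReal.ofReal (F r))) (r • a₁)]
      congr 1
      funext x
      have hx : x + r • a₁ + (-r) • a₁ = x := by
        rw [neg_smul]
        abel
      rw [hx]
    rw [lintegral_congr step1]
    have step2 : ∫⁻ r, (∫⁻ x, C.indicator (fun _ => (1:ℝ≥0∞)) (x + (-r) • a₁)
          * (D.indicator (fun _ => (1:ℝ≥0∞)) x * ENNReal.ofReal (F r)) ∂volume) ∂volume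
        = ∫⁻ r, (∫⁻ x, C.indicator (fun _ => (1:ℝ≥0∞)) (x + r • a₁)
          * (D.indicator (fun _ => (1:ℝ≥0∞)) x * ENNReal.ofReal (F r)) ∂volume) ∂volume := by
      rw [← negint (fun s => ∫⁻ x, C.indicator (fun _ => (1:ℝ≥0∞)) (x + s • a₁)
        * (D.indicator (fun _ => (1:ℝ≥0∞)) x * ENNReal.ofReal (F s)) ∂volume)]
      apply lintegral_congr
      intro r
      congr 1
      funext x
      rw [hF_neg]
    rw [step2, lintegral_lintegral_swap m2.aemeasurable]
    apply lintegral_congr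
    intro x
    apply lintegral_congr
    intro r
    ring
  -- assembling the lintegral identity
  have hNassemble : ∀ (C D : Set (EuclideanSpace ℝ (Fin d))),
      MeasurableSet C → MeasurableSet D →
      ∫⁻ x in C ∩ S, N D x ∂volume
      = (1/2 : ℝ≥0∞) * (∫⁻ x in C ∩ S, G (S ∩ D) x ∂volume)
        + ∫⁻ x in D ∩ (C ∩ S), (1 - (1/2:ℝ≥0∞) * G S x) ∂volume := by
    intro C D hC hD
    rw [hNdef]
    dsimp only
    rw [lintegral_add_left (f := fun x => (1/2 : ℝ≥0∞) * G (S ∩ D) x)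
      (measurable_const.mul (hGmeas _ (hSmeas.inter hD))),
      lintegral_const_mul _ (hGmeas _ (hSmeas.inter hD)),
      lintegral_indicator hD, Measure.restrict_restrict hD]
  have hmain : ∫⁻ x in A ∩ S, N B x ∂volume = ∫⁻ x in B ∩ S, N A x ∂volume := by
    rw [hNassemble A B hA hB, hNassemble B A hB hA]
    congr 1
    · congr 1
      have h := swap (A ∩ S) (S ∩ B) (hA.inter hSmeas) (hSmeas.inter hB)
      rw [h, Set.inter_comm S B, Set.inter_comm A S]
    · have h : B ∩ (A ∩ S) = A ∩ (B ∩ S) := by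
        ext z
        simp only [Set.mem_inter_iff]
        tauto
      rw [h]
  -- conclusion
  have goalrw : ∀ (P Q : Set (EuclideanSpace ℝ (Fin d))),
      MeasurableSet P → MeasurableSet Q →
      ∫ x in P ∩ S, lazyLineMetropolis K ρ q a₁ a₂ x Q ∂volume
        = (∫⁻ x in P ∩ S, N Q x ∂volume).toReal := by
    intro P Q hP hQ
    rw [setIntegral_congr_fun (hP.inter hSmeas) (fun x _ => hM Q hQ x)]
    exact integral_toReal ((hNmeas Q hQ).aemeasurable) (ae_of_all _ fun x => hNtop Q x)
  rw [goalrw A B hA hB, goalrw B A hB hA, hmain]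


end LazyLineMetropolisReversible
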